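/- Let λ be a partition and k an integer with k ≥ ℓ(λ). Then k · Σ_{T ∈ SSYT_λ(k)} #(k,T) = |λ| · |SSYT_λ(k)|, where #(k,T) denotes the number of cells of T whose entry equals k and |λ| is the number of cells of λ. -/

import Mathlib

/-- The set of semistandard Young tableaux of shape `μ` with entries from `{1, …, k}`. -/
def ssytSet (μ : YoungDiagram) (k : ℕ) : Set (SemistandardYoungTableau μ) :=
  {T | ∀ i j, (i, j) ∈ μ → 1 ≤ T i j ∧ T i j ≤ k}

/-- The number of semistandard Young tableaux of shape `μ` with entries from `{1, …, k}`. -/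
noncomputable def ssytCount (μ : YoungDiagram) (k : ℕ) : ℕ := (ssytSet μ k).ncard

open Finset

namespace BKAux

variable {μ : YoungDiagram}

lemma mem_of_ne_zero (T : SemistandardYoungTableau μ) {i j : ℕ} (h : T i j ≠ 0) : (i, j) ∈ μ := by
  by_contra hc; exact h (T.zeros hc)

/-- A cell is *free* (for the Bender–Knuth involution swapping `v+1` and `v+2`) if it has value
`v+1` with no `v+2` directly below, or value `v+2` with no `v+1` directly above. -/
def IsFree (v : ℕ) (T : SemistandardYoungTableau μ) (r c : ℕ) : Prop :=
  (T r c = v + 1 ∧ T (r + 1) c ≠ v + 2) ∨ (T r c = v + 2 ∧ T (r - 1) c ≠ v + 1)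

instance (v : ℕ) (T : SemistandardYoungTableau μ) (r c : ℕ) : Decidable (IsFree v T r c) := by
  unfold IsFree; infer_instance

lemma IsFree.val {v : ℕ} {T : SemistandardYoungTableau μ} {r c : ℕ} (h : IsFree v T r c) :
    T r c = v + 1 ∨ T r c = v + 2 := h.imp (fun h => h.1) (fun h => h.1)

lemma IsFree.mem {v : ℕ} {T : SemistandardYoungTableau μ} {r c : ℕ} (h : IsFree v T r c) :
    (r, c) ∈ μ := mem_of_ne_zero T (by rcases h.val with h | h <;> omega)

/-- A1 : a bound low cell (value `v+1` with `v+2` below) lies strictly left of any free cell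
in the same row. -/
lemma boundLow_lt_free {v : ℕ} {T : SemistandardYoungTableau μ} {r c c' : ℕ}
    (h1 : T r c = v + 1) (h2 : T (r + 1) c = v + 2) (hf : IsFree v T r c') : c < c' := by
  by_contra hle
  push_neg at hle
  have hmem : (r, c) ∈ μ := mem_of_ne_zero T (by omega)
  have hmem1 : (r + 1, c) ∈ μ := mem_of_ne_zero T (by omega)
  have hval : T r c' ≤ v + 1 := h1 ▸ T.row_weak_of_le hle hmem
  have hval' : T r c' = v + 1 := by rcases hf.val with h | h <;> omega
  have hmem1' : (r + 1, c') ∈ μ := μ.up_left_mem le_rfl hle hmem1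
  have hb1 : T r c' < T (r + 1) c' := T.col_strict (Nat.lt_succ_self r) hmem1'
  have hb2 : T (r + 1) c' ≤ v + 2 := h2 ▸ T.row_weak_of_le hle hmem1
  rcases hf with ⟨_, hnb⟩ | ⟨hv2, _⟩
  · exact hnb (by omega)
  · omega

/-- A2 : a free cell lies strictly left of any bound high cell (value `v+2` with `v+1` above)
in the same row. -/
lemma free_lt_boundHigh {v : ℕ} {T : SemistandardYoungTableau μ} {r c c' : ℕ}
    (hf : IsFree v T r c) (h1 : T r c' = v + 2) (h2 : T (r - 1) c' = v + 1) : c < c' := by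
  by_contra hle
  push_neg at hle
  have hmem : (r, c) ∈ μ := hf.mem
  have hge : v + 2 ≤ T r c := h1 ▸ T.row_weak_of_le hle hmem
  have hval : T r c = v + 2 := by rcases hf.val with h | h <;> omega
  have hr : r ≠ 0 := by rintro rfl; simp at h2; omega
  have hnabove : T (r - 1) c ≠ v + 1 := by
    rcases hf with ⟨h, _⟩ | ⟨_, h⟩
    · omega
    · exact h
  have hmemu : (r - 1, c) ∈ μ := μ.up_left_mem (Nat.sub_le r 1) le_rfl hmem
  have ha1 : T (r - 1) c' ≤ T (r - 1) c := T.row_weak_of_le hle hmemu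
  have ha2 : T (r - 1) c < T r c := T.col_strict (by omega) hmem
  omega

/-- A3 : among free cells in a row, values are monotone (`v+1`s come first). -/
lemma free_val_mono {v : ℕ} {T : SemistandardYoungTableau μ} {r c c' : ℕ}
    (hc : IsFree v T r c) (hc' : IsFree v T r c') (hle : c ≤ c') (h1 : T r c' = v + 1) :
    T r c = v + 1 := by
  have := T.row_weak_of_le hle hc'.mem
  rcases hc.val with h | h <;> omega

/-- The finset of free cells in row `r`. -/
def freeSet (v : ℕ) (T : SemistandardYoungTableau μ) (r : ℕ) : Finset ℕ :=
  (Finset.range (μ.rowLen r)).filter fun c => IsFree v T r c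

lemma mem_freeSet {v : ℕ} {T : SemistandardYoungTableau μ} {r c : ℕ} :
    c ∈ freeSet v T r ↔ IsFree v T r c := by
  constructor
  · intro h; exact (Finset.mem_filter.mp h).2
  · intro h
    refine Finset.mem_filter.mpr ⟨Finset.mem_range.mpr ?_, h⟩
    exact YoungDiagram.mem_iff_lt_rowLen.mp h.mem

def acount (v : ℕ) (T : SemistandardYoungTableau μ) (r : ℕ) : ℕ :=
  ((freeSet v T r).filter fun c => T r c = v + 1).card

def bcount (v : ℕ) (T : SemistandardYoungTableau μ) (r : ℕ) : ℕ :=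
  ((freeSet v T r).filter fun c => T r c = v + 2).card

def rank (v : ℕ) (T : SemistandardYoungTableau μ) (r c : ℕ) : ℕ :=
  ((freeSet v T r).filter fun c' => c' < c).card

lemma acount_add_bcount (v : ℕ) (T : SemistandardYoungTableau μ) (r : ℕ) :
    acount v T r + bcount v T r = (freeSet v T r).card := by
  rw [acount, bcount]
  rw [← Finset.card_filter_add_card_filter_not (s := freeSet v T r)
    (p := fun c => T r c = v + 1)]
  congr 1
  apply congrArg
  apply Finset.filter_congr
  intro c hc
  have := (mem_freeSet.mp hc).val
  constructor <;> omega

lemma rank_lt_rank {v : ℕ} {T : SemistandardYoungTableau μ} {r c c' : ℕ}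
    (hc : IsFree v T r c) (hlt : c < c') : rank v T r c < rank v T r c' := by
  apply Finset.card_lt_card
  constructor
  · intro x hx
    simp only [Finset.mem_filter] at hx ⊢
    exact ⟨hx.1, by omega⟩
  · intro hsub
    have : c ∈ (freeSet v T r).filter fun x => x < c' :=
      Finset.mem_filter.mpr ⟨mem_freeSet.mpr hc, hlt⟩
    have := Finset.mem_filter.mp (hsub this)
    omega

lemma rank_lt_acount {v : ℕ} {T : SemistandardYoungTableau μ} {r c : ℕ}
    (hc : IsFree v T r c) (hval : T r c = v + 1) : rank v T r c < acount v T r := by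
  have hsub : ((freeSet v T r).filter fun c' => c' < c) ⊆
      ((freeSet v T r).filter fun c' => T r c' = v + 1).erase c := by
    intro x hx
    rw [Finset.mem_filter] at hx
    refine Finset.mem_erase.mpr ⟨by omega, Finset.mem_filter.mpr ⟨hx.1, ?_⟩⟩
    exact free_val_mono (mem_freeSet.mp hx.1) hc (by omega) hval
  have hcard := Finset.card_le_card hsub
  have hmem : c ∈ (freeSet v T r).filter fun c' => T r c' = v + 1 :=
    Finset.mem_filter.mpr ⟨mem_freeSet.mpr hc, hval⟩
  have := Finset.card_erase_of_mem hmem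
  have hpos : 0 < acount v T r := Finset.card_pos.mpr ⟨c, hmem⟩
  rw [rank]; rw [acount] at hpos ⊢
  omega

lemma acount_le_rank {v : ℕ} {T : SemistandardYoungTableau μ} {r c : ℕ}
    (hc : IsFree v T r c) (hval : T r c = v + 2) : acount v T r ≤ rank v T r c := by
  apply Finset.card_le_card
  intro x hx
  rw [Finset.mem_filter] at hx
  refine Finset.mem_filter.mpr ⟨hx.1, ?_⟩
  by_contra hle
  push_neg at hle
  have := T.row_weak_of_le hle (mem_freeSet.mp hx.1).mem
  omega

lemma rank_lt_card {v : ℕ} {T : SemistandardYoungTableau μ} {r c : ℕ}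
    (hc : c ∈ freeSet v T r) : rank v T r c < (freeSet v T r).card := by
  have hsub : ((freeSet v T r).filter fun c' => c' < c) ⊆ (freeSet v T r).erase c := by
    intro x hx
    rw [Finset.mem_filter] at hx
    exact Finset.mem_erase.mpr ⟨by omega, hx.1⟩
  have := Finset.card_le_card hsub
  have := Finset.card_erase_of_mem hc
  have : 0 < (freeSet v T r).card := Finset.card_pos.mpr ⟨c, hc⟩
  rw [rank]
  omega

lemma card_filter_rank_lt (v : ℕ) (T : SemistandardYoungTableau μ) (r m : ℕ) :
    ((freeSet v T r).filter fun c => rank v T r c < m).card = min m (freeSet v T r).card := by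
  set F := freeSet v T r with hF
  have hinj : Set.InjOn (rank v T r) ↑F := by
    intro a ha b hb hab
    by_contra hne
    rcases Ne.lt_or_gt hne with h | h
    · have := rank_lt_rank (mem_freeSet.mp (by exact_mod_cast ha)) h; omega
    · have := rank_lt_rank (mem_freeSet.mp (by exact_mod_cast hb)) h; omega
  have himage : F.image (rank v T r) = Finset.range F.card := by
    apply Finset.eq_of_subset_of_card_le
    · intro x hx
      rcases Finset.mem_image.mp hx with ⟨c, hc, rfl⟩
      exact Finset.mem_range.mpr (rank_lt_card hc)
    · rw [Finset.card_range, Finset.card_image_of_injOn hinj]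
  have h1 : ((F.image (rank v T r)).filter fun x => x < m) =
      (F.filter fun c => rank v T r c < m).image (rank v T r) := Finset.filter_image
  have h2 : ((F.filter fun c => rank v T r c < m).image (rank v T r)).card =
      (F.filter fun c => rank v T r c < m).card :=
    Finset.card_image_of_injOn (hinj.mono (by exact_mod_cast Finset.filter_subset _ _))
  have h3 : ((Finset.range F.card).filter fun x => x < m) = Finset.range (min m F.card) := by
    ext x; simp only [Finset.mem_filter, Finset.mem_range]; omega
  rw [← h2, ← h1, himage, h3, Finset.card_range]

end BKAux

namespace BKAux

variable {μ : YoungDiagram}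

/-- The Bender–Knuth new entry function. -/
def newE (v : ℕ) (T : SemistandardYoungTableau μ) (r c : ℕ) : ℕ :=
  if IsFree v T r c then (if rank v T r c < bcount v T r then v + 1 else v + 2) else T r c

lemma newE_of_not_free {v : ℕ} {T : SemistandardYoungTableau μ} {r c : ℕ}
    (h : ¬IsFree v T r c) : newE v T r c = T r c := if_neg h

lemma newE_free_val {v : ℕ} {T : SemistandardYoungTableau μ} {r c : ℕ}
    (h : IsFree v T r c) : newE v T r c = v + 1 ∨ newE v T r c = v + 2 := by
  rw [newE, if_pos h]
  split <;> simp

lemma newE_row_weak {v : ℕ} {T : SemistandardYoungTableau μ} {i j1 j2 : ℕ}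
    (hj : j1 < j2) (hmem : (i, j2) ∈ μ) : newE v T i j1 ≤ newE v T i j2 := by
  by_cases h1 : IsFree v T i j1 <;> by_cases h2 : IsFree v T i j2
  · -- both free
    rcases newE_free_val h2 with h | h
    · -- newE at j2 is v+1, so rank j2 < bcount, hence rank j1 < bcount
      have hrank : rank v T i j2 < bcount v T i := by
        by_contra hc
        rw [newE, if_pos h2, if_neg hc] at h
        omega
      have : rank v T i j1 < bcount v T i := (rank_lt_rank h1 hj).trans_le hrank.le
      rw [newE, if_pos h1, if_pos this]
      omega
    · rcases newE_free_val h1 with h' | h' <;> omega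
  · -- j1 free, j2 not free
    rw [newE_of_not_free h2]
    have hle : T i j1 ≤ T i j2 := T.row_weak hj hmem
    have hv1 : v + 1 ≤ T i j1 := by rcases h1.val with h | h <;> omega
    unfold IsFree at h2
    push_neg at h2
    by_cases hcase : T i j2 = v + 1
    · -- bound low at j2, left of free j1 : contradiction
      have := boundLow_lt_free hcase (h2.1 hcase) h1
      omega
    · have : v + 2 ≤ T i j2 := by omega
      rcases newE_free_val h1 with h | h <;> omega
  · -- j1 not free, j2 free
    rw [newE_of_not_free h1]
    have hge : v + 1 ≤ newE v T i j2 := by rcases newE_free_val h2 with h | h <;> omega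
    have hle : T i j1 ≤ T i j2 := T.row_weak hj hmem
    have hv2 : T i j2 ≤ v + 2 := by rcases h2.val with h | h <;> omega
    unfold IsFree at h1
    push_neg at h1
    by_cases hcase : T i j1 = v + 2
    · have := free_lt_boundHigh h2 hcase (h1.2 hcase)
      omega
    · omega
  · rw [newE_of_not_free h1, newE_of_not_free h2]
    exact T.row_weak hj hmem

end BKAux

namespace BKAux

variable {μ : YoungDiagram}

lemma newE_col_strict_adj {v : ℕ} {T : SemistandardYoungTableau μ} {i j : ℕ}
    (hmem : (i + 1, j) ∈ μ) : newE v T i j < newE v T (i + 1) j := by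
  have hlt : T i j < T (i + 1) j := T.col_strict (Nat.lt_succ_self i) hmem
  by_cases h1 : IsFree v T i j <;> by_cases h2 : IsFree v T (i + 1) j
  · -- both free : impossible
    exfalso
    have hv1 : T i j = v + 1 := by
      rcases h1.val with h | h
      · exact h
      · rcases h2.val with h' | h' <;> omega
    have hv2 : T (i + 1) j = v + 2 := by rcases h2.val with h | h <;> omega
    rcases h2 with ⟨h, _⟩ | ⟨_, h⟩
    · omega
    · simp only [Nat.add_sub_cancel] at h
      exact h hv1
  · -- i free, i+1 not
    rw [newE_of_not_free h2]
    have hv1 : v + 1 ≤ T i j := by rcases h1.val with h | h <;> omega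
    have : v + 2 ≤ T (i + 1) j := by omega
    by_cases hcase : T (i + 1) j = v + 2
    · -- then T i j = v+1 and bound low : contradicts freeness of (i,j)
      exfalso
      have hv1' : T i j = v + 1 := by rcases h1.val with h | h <;> omega
      rcases h1 with ⟨_, h⟩ | ⟨h, _⟩
      · exact h hcase
      · omega
    · rcases newE_free_val h1 with h | h <;> omega
  · -- i not free, i+1 free
    rw [newE_of_not_free h1]
    have hge : v + 1 ≤ newE v T (i + 1) j := by rcases newE_free_val h2 with h | h <;> omega
    have hv2 : T (i + 1) j ≤ v + 2 := by rcases h2.val with h | h <;> omega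
    by_cases hcase : T i j = v + 1
    · -- then T (i+1) j = v + 2 and (i+1, j) is bound high : contradiction
      exfalso
      have hv2' : T (i + 1) j = v + 2 := by omega
      rcases h2 with ⟨h, _⟩ | ⟨_, h⟩
      · omega
      · simp only [Nat.add_sub_cancel] at h
        exact h hcase
    · omega
  · rw [newE_of_not_free h1, newE_of_not_free h2]
    exact hlt

lemma newE_col_strict {v : ℕ} {T : SemistandardYoungTableau μ} {i1 i2 j : ℕ}
    (hi : i1 < i2) (hmem : (i2, j) ∈ μ) : newE v T i1 j < newE v T i2 j := by
  induction i2 with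
  | zero => omega
  | succ n ih =>
    rcases Nat.lt_succ_iff_lt_or_eq.mp hi with h | h
    · have hmem' : (n, j) ∈ μ := μ.up_left_mem (Nat.le_succ n) le_rfl hmem
      exact (ih h hmem').trans (newE_col_strict_adj hmem)
    · subst h
      exact newE_col_strict_adj hmem

lemma newE_zeros {v : ℕ} {T : SemistandardYoungTableau μ} {i j : ℕ}
    (h : (i, j) ∉ μ) : newE v T i j = 0 := by
  rw [newE_of_not_free fun hf => h hf.mem]
  exact T.zeros h

/-- The Bender–Knuth involution swapping values `v+1` and `v+2`. -/
def bk (v : ℕ) (T : SemistandardYoungTableau μ) : SemistandardYoungTableau μ where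
  entry := newE v T
  row_weak' := fun hj hmem => newE_row_weak hj hmem
  col_strict' := fun hi hmem => newE_col_strict hi hmem
  zeros' := fun h => newE_zeros h

lemma bk_apply (v : ℕ) (T : SemistandardYoungTableau μ) (i j : ℕ) :
    bk v T i j = newE v T i j := rfl

end BKAux

namespace BKAux

variable {μ : YoungDiagram}

lemma free_bk_of_free {v : ℕ} {T : SemistandardYoungTableau μ} {r c : ℕ}
    (h : IsFree v T r c) : IsFree v (bk v T) r c := by
  have hmem : (r, c) ∈ μ := h.mem
  by_cases hrank : rank v T r c < bcount v T r
  · -- new value is v+1; must verify no v+2 directly below in bk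
    left
    have hval : bk v T r c = v + 1 := by rw [bk_apply, newE, if_pos h, if_pos hrank]
    refine ⟨hval, ?_⟩
    by_cases hmem1 : (r + 1, c) ∈ μ
    · have hcs : T r c < T (r + 1) c := T.col_strict (Nat.lt_succ_self r) hmem1
      by_cases h2 : IsFree v T (r + 1) c
      · exfalso
        have hv2 : T (r + 1) c = v + 2 := by
          rcases h2.val with h' | h' <;> rcases h.val with h'' | h'' <;> omega
        have hv1 : T r c = v + 1 := by rcases h.val with h'' | h'' <;> omega
        rcases h2 with ⟨h', _⟩ | ⟨_, h'⟩
        · omega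
        · simp only [Nat.add_sub_cancel] at h'
          exact h' hv1
      · rw [bk_apply, newE_of_not_free h2]
        intro hc2
        have hv1 : T r c = v + 1 := by rcases h.val with h'' | h'' <;> omega
        rcases h with ⟨_, h'⟩ | ⟨h', _⟩
        · exact h' hc2
        · omega
    · rw [bk_apply, newE_zeros hmem1]
      omega
  · -- new value is v+2; must verify no v+1 directly above in bk
    right
    have hval : bk v T r c = v + 2 := by rw [bk_apply, newE, if_pos h, if_neg hrank]
    refine ⟨hval, ?_⟩
    match r with
    | 0 => simp only [Nat.zero_sub]; omega
    | s + 1 =>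
      simp only [Nat.add_sub_cancel]
      have hcs : T s c < T (s + 1) c := T.col_strict (Nat.lt_succ_self s) hmem
      have hv2 : T (s + 1) c ≤ v + 2 := by rcases h.val with h' | h' <;> omega
      have hsle : T s c ≤ v := by
        by_contra hc
        push_neg at hc
        have hs1 : T s c = v + 1 := by omega
        have : T (s + 1) c = v + 2 := by rcases h.val with h' | h' <;> omega
        rcases h with ⟨h', _⟩ | ⟨_, h'⟩
        · omega
        · simp only [Nat.add_sub_cancel] at h'
          exact h' hs1
      have hnf : ¬IsFree v T s c := by
        intro hf
        rcases hf.val with h' | h' <;> omega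
      rw [bk_apply, newE_of_not_free hnf]
      omega

lemma not_free_bk {v : ℕ} {T : SemistandardYoungTableau μ} {r c : ℕ}
    (h : ¬IsFree v T r c) : ¬IsFree v (bk v T) r c := by
  intro hf
  have hbk : bk v T r c = T r c := newE_of_not_free h
  unfold IsFree at h
  push_neg at h
  rcases hf with ⟨h1, h2⟩ | ⟨h1, h2⟩
  · -- value v+1, so (r+1, c) is bound-high and keeps its value v+2
    rw [hbk] at h1
    have hbelow : T (r + 1) c = v + 2 := h.1 h1
    have hnf1 : ¬IsFree v T (r + 1) c := by
      rintro (⟨h', _⟩ | ⟨_, h'⟩)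
      · omega
      · simp only [Nat.add_sub_cancel] at h'
        exact h' h1
    rw [bk_apply, newE_of_not_free hnf1] at h2
    exact h2 hbelow
  · -- value v+2, so (r-1, c) is bound-low and keeps its value v+1
    rw [hbk] at h1
    have habove : T (r - 1) c = v + 1 := h.2 h1
    have hr : r ≠ 0 := by rintro rfl; simp at habove; omega
    obtain ⟨s, rfl⟩ : ∃ s, r = s + 1 := ⟨r - 1, by omega⟩
    simp only [Nat.add_sub_cancel] at habove h2
    have hnf1 : ¬IsFree v T s c := by
      rintro (⟨_, h'⟩ | ⟨h', _⟩)
      · exact h' h1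
      · omega
    rw [bk_apply, newE_of_not_free hnf1] at h2
    exact h2 habove

lemma isFree_bk_iff {v : ℕ} {T : SemistandardYoungTableau μ} {r c : ℕ} :
    IsFree v (bk v T) r c ↔ IsFree v T r c := by
  constructor
  · intro h
    by_contra hc
    exact not_free_bk hc h
  · exact free_bk_of_free

lemma freeSet_bk (v : ℕ) (T : SemistandardYoungTableau μ) (r : ℕ) :
    freeSet v (bk v T) r = freeSet v T r := by
  ext c
  rw [mem_freeSet, mem_freeSet, isFree_bk_iff]

lemma rank_bk (v : ℕ) (T : SemistandardYoungTableau μ) (r c : ℕ) :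
    rank v (bk v T) r c = rank v T r c := by
  unfold rank
  rw [freeSet_bk]

lemma bcount_le_card (v : ℕ) (T : SemistandardYoungTableau μ) (r : ℕ) :
    bcount v T r ≤ (freeSet v T r).card := Finset.card_filter_le _ _

lemma bcount_bk (v : ℕ) (T : SemistandardYoungTableau μ) (r : ℕ) :
    bcount v (bk v T) r = acount v T r := by
  have h1 : bcount v (bk v T) r =
      ((freeSet v T r).filter fun c => ¬rank v T r c < bcount v T r).card := by
    rw [bcount, freeSet_bk]
    congr 1
    apply Finset.filter_congr
    intro c hc
    have hf := mem_freeSet.mp hc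
    rw [bk_apply, newE, if_pos hf]
    constructor
    · intro h
      split at h <;> omega
    · intro h
      rw [if_neg h]
  have h2 := Finset.card_filter_add_card_filter_not (s := freeSet v T r)
    (p := fun c => rank v T r c < bcount v T r)
  rw [card_filter_rank_lt] at h2
  have h3 := acount_add_bcount v T r
  have h4 := bcount_le_card v T r
  omega

lemma bk_bk (v : ℕ) (T : SemistandardYoungTableau μ) : bk v (bk v T) = T := by
  ext i j
  by_cases h : IsFree v T i j
  · have hbkf : IsFree v (bk v T) i j := free_bk_of_free h
    rw [bk_apply, newE, if_pos hbkf, rank_bk, bcount_bk]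
    rcases h.val with hv | hv
    · rw [if_pos (rank_lt_acount h hv), hv]
    · rw [if_neg (by have := acount_le_rank h hv; omega), hv]
  · rw [bk_apply, newE_of_not_free (not_free_bk h), bk_apply, newE_of_not_free h]

end BKAux

namespace BKAux

variable {μ : YoungDiagram}

lemma card_filter_cells_eq_sum (P : ℕ × ℕ → Prop) [DecidablePred P] :
    (μ.cells.filter P).card =
      ∑ r ∈ Finset.range (μ.colLen 0),
        ((Finset.range (μ.rowLen r)).filter fun c => P (r, c)).card := by
  rw [Finset.card_eq_sum_card_fiberwise (f := Prod.fst) (t := Finset.range (μ.colLen 0))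
    (fun p hp => by
      rw [Finset.mem_coe, Finset.mem_range, ← YoungDiagram.mem_iff_lt_colLen]
      exact μ.up_left_mem le_rfl (Nat.zero_le _)
        (by simpa using (Finset.mem_filter.mp hp).1))]
  apply Finset.sum_congr rfl
  intro r _
  apply Finset.card_nbij' (i := Prod.snd) (j := fun c => (r, c))
  · rintro ⟨a, b⟩ hp
    simp only [Finset.mem_coe, Finset.mem_filter, YoungDiagram.mem_cells] at hp
    obtain ⟨⟨hmem, hP⟩, rfl⟩ := hp
    simp only [Finset.mem_coe, Finset.mem_filter, Finset.mem_range]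
    exact ⟨YoungDiagram.mem_iff_lt_rowLen.mp hmem, hP⟩
  · intro c hc
    simp only [Finset.mem_coe, Finset.mem_filter, Finset.mem_range] at hc
    simp only [Finset.mem_coe, Finset.mem_filter, YoungDiagram.mem_cells]
    exact ⟨⟨YoungDiagram.mem_iff_lt_rowLen.mpr hc.1, hc.2⟩, trivial⟩
  · rintro ⟨a, b⟩ hp
    simp only [Finset.mem_coe, Finset.mem_filter] at hp
    simp [hp.2]
  · intro c _
    rfl

lemma card_boundLow_eq_card_boundHigh (v : ℕ) (T : SemistandardYoungTableau μ) :
    (μ.cells.filter fun p => T p.1 p.2 = v + 1 ∧ ¬IsFree v T p.1 p.2).card =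
      (μ.cells.filter fun p => T p.1 p.2 = v + 2 ∧ ¬IsFree v T p.1 p.2).card := by
  apply Finset.card_nbij' (i := fun p => (p.1 + 1, p.2)) (j := fun p => (p.1 - 1, p.2))
  · intro p hp
    simp only [Finset.mem_coe, Finset.mem_filter, YoungDiagram.mem_cells] at hp ⊢
    obtain ⟨hmem, hval, hnf⟩ := hp
    unfold IsFree at hnf
    push_neg at hnf
    have hbelow : T (p.1 + 1) p.2 = v + 2 := hnf.1 hval
    refine ⟨mem_of_ne_zero T (by omega), hbelow, ?_⟩
    rintro (⟨h', _⟩ | ⟨_, h'⟩)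
    · omega
    · simp only [Nat.add_sub_cancel] at h'
      exact h' hval
  · intro p hp
    simp only [Finset.mem_coe, Finset.mem_filter, YoungDiagram.mem_cells] at hp ⊢
    obtain ⟨hmem, hval, hnf⟩ := hp
    unfold IsFree at hnf
    push_neg at hnf
    have habove : T (p.1 - 1) p.2 = v + 1 := hnf.2 hval
    have hr : p.1 ≠ 0 := by
      rintro h
      rw [h] at habove hval
      simp at habove
      omega
    refine ⟨μ.up_left_mem (Nat.sub_le _ _) le_rfl hmem, habove, ?_⟩
    rintro (⟨_, h'⟩ | ⟨h', _⟩)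
    · rw [show p.1 - 1 + 1 = p.1 by omega] at h'
      exact h' hval
    · omega
  · intro p hp
    simp
  · intro p hp
    simp only [Finset.mem_coe, Finset.mem_filter, YoungDiagram.mem_cells] at hp
    obtain ⟨hmem, hval, hnf⟩ := hp
    unfold IsFree at hnf
    push_neg at hnf
    have habove : T (p.1 - 1) p.2 = v + 1 := hnf.2 hval
    have hr : p.1 ≠ 0 := by
      rintro h
      rw [h] at habove hval
      simp at habove
      omega
    have : p.1 - 1 + 1 = p.1 := by omega
    simp [this]

/-- The key count identity: the number of `v+2` entries of `bk v T` equals the number of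
`v+1` entries of `T`. -/
lemma card_bk_eq (v : ℕ) (T : SemistandardYoungTableau μ) :
    (μ.cells.filter fun p => bk v T p.1 p.2 = v + 2).card =
      (μ.cells.filter fun p => T p.1 p.2 = v + 1).card := by
  have hsplit : ∀ (f : SemistandardYoungTableau μ) (w : ℕ),
      (μ.cells.filter fun p => f p.1 p.2 = w).card =
        (μ.cells.filter fun p => f p.1 p.2 = w ∧ IsFree v T p.1 p.2).card +
        (μ.cells.filter fun p => f p.1 p.2 = w ∧ ¬IsFree v T p.1 p.2).card := by
    intro f w
    rw [← Finset.card_filter_add_card_filter_not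
      (s := μ.cells.filter fun p => f p.1 p.2 = w) (p := fun p => IsFree v T p.1 p.2),
      Finset.filter_filter, Finset.filter_filter]
  rw [hsplit (bk v T) (v + 2), hsplit T (v + 1)]
  congr 1
  · -- free parts : rowwise both count `acount`
    rw [card_filter_cells_eq_sum, card_filter_cells_eq_sum]
    apply Finset.sum_congr rfl
    intro r _
    have e1 : ((Finset.range (μ.rowLen r)).filter fun c => bk v T r c = v + 2 ∧ IsFree v T r c)
        = (freeSet v (bk v T) r).filter fun c => bk v T r c = v + 2 := by
      rw [freeSet_bk]
      unfold freeSet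
      rw [Finset.filter_filter]
      apply Finset.filter_congr
      intro c _
      tauto
    have e2 : ((Finset.range (μ.rowLen r)).filter fun c => T r c = v + 1 ∧ IsFree v T r c)
        = (freeSet v T r).filter fun c => T r c = v + 1 := by
      unfold freeSet
      rw [Finset.filter_filter]
      apply Finset.filter_congr
      intro c _
      tauto
    rw [e1, e2]
    exact bcount_bk v T r
  · -- bound parts : values unchanged, then the vertical pairing
    have e : (μ.cells.filter fun p => bk v T p.1 p.2 = v + 2 ∧ ¬IsFree v T p.1 p.2)
        = μ.cells.filter fun p => T p.1 p.2 = v + 2 ∧ ¬IsFree v T p.1 p.2 := by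
      apply Finset.filter_congr
      intro p _
      constructor
      · rintro ⟨h1, h2⟩
        rw [bk_apply, newE_of_not_free h2] at h1
        exact ⟨h1, h2⟩
      · rintro ⟨h1, h2⟩
        rw [bk_apply, newE_of_not_free h2]
        exact ⟨h1, h2⟩
    rw [e, ← card_boundLow_eq_card_boundHigh]

end BKAux

namespace BKAux

variable {μ : YoungDiagram}

lemma bk_mem {v k : ℕ} (hv : v + 2 ≤ k) {T : SemistandardYoungTableau μ}
    (hT : T ∈ ssytSet μ k) : bk v T ∈ ssytSet μ k := by
  intro i j hmem
  by_cases h : IsFree v T i j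
  · rcases newE_free_val h with h' | h' <;> rw [bk_apply, h'] <;> omega
  · rw [bk_apply, newE_of_not_free h]
    exact hT i j hmem

lemma ssytSet_finite (μ : YoungDiagram) (k : ℕ) : (ssytSet μ k).Finite := by
  have hfin : Finite (ssytSet μ k) := by
    have hb : ∀ (T : ssytSet μ k) (c : μ.cells), T.1 c.1.1 c.1.2 < k + 1 := by
      intro T c
      have hc : (c.1.1, c.1.2) ∈ μ := by
        rw [← YoungDiagram.mem_cells]
        exact c.2
      exact Nat.lt_succ_of_le (T.2 c.1.1 c.1.2 hc).2
    let f : ssytSet μ k → (μ.cells → Fin (k + 1)) := fun T c => ⟨T.1 c.1.1 c.1.2, hb T c⟩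
    have hinj : Function.Injective f := by
      intro T T' h
      apply Subtype.ext
      ext i j
      by_cases hm : (i, j) ∈ μ
      · have := congrFun h ⟨(i, j), (YoungDiagram.mem_cells _).mpr hm⟩
        exact congrArg Fin.val this
      · rw [T.1.zeros hm, T'.1.zeros hm]
    exact Finite.of_injective f hinj
  exact Set.finite_coe_iff.mp hfin

end BKAux

open BKAux

/-- For a partition (Young diagram) `μ` with at most `k` rows,
`k · Σ_{T ∈ SSYT_μ(k)} #(k, T) = |μ| · |SSYT_μ(k)|`, where `#(k, T)` is the number of
cells of `T` whose entry equals `k`. -/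
theorem ssyt_max_entry_count (μ : YoungDiagram) (k : ℕ) (hk : μ.colLen 0 ≤ k) :
    k * (∑ᶠ T ∈ ssytSet μ k, (μ.cells.filter fun c => T c.1 c.2 = k).card) =
      μ.card * ssytCount μ k := by
  classical
  have hS := ssytSet_finite μ k
  set S : Finset (SemistandardYoungTableau μ) := hS.toFinset with hSdef
  have hmemS : ∀ T, T ∈ S ↔ T ∈ ssytSet μ k := fun T => hS.mem_toFinset
  have hfs : (∑ᶠ T ∈ ssytSet μ k, (μ.cells.filter fun c => T c.1 c.2 = k).card)
      = ∑ T ∈ S, (μ.cells.filter fun c => T c.1 c.2 = k).card := by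
    conv_lhs => rw [← hS.coe_toFinset]
    rw [finsum_mem_coe_finset]
  have hcount : ssytCount μ k = S.card := Set.ncard_eq_toFinset_card _ hS
  -- step : adjacent swap
  have key1 : ∀ j, 1 ≤ j → j < k →
      (∑ T ∈ S, (μ.cells.filter fun c => T c.1 c.2 = j).card)
        = ∑ T ∈ S, (μ.cells.filter fun c => T c.1 c.2 = (j + 1)).card := by
    intro j h1 h2
    obtain ⟨v, rfl⟩ : ∃ v, j = v + 1 := ⟨j - 1, by omega⟩
    refine Finset.sum_nbij' (i := bk v) (j := bk v) ?_ ?_ ?_ ?_ ?_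
    · intro T hT
      exact (hmemS _).mpr (bk_mem (by omega) ((hmemS _).mp hT))
    · intro T hT
      exact (hmemS _).mpr (bk_mem (by omega) ((hmemS _).mp hT))
    · intro T _
      exact bk_bk v T
    · intro T _
      exact bk_bk v T
    · intro T _
      exact (card_bk_eq v T).symm
  have key2 : ∀ d j, 1 ≤ j → j + d = k →
      (∑ T ∈ S, (μ.cells.filter fun c => T c.1 c.2 = j).card)
        = ∑ T ∈ S, (μ.cells.filter fun c => T c.1 c.2 = k).card := by
    intro d
    induction d with
    | zero =>
      intro j h1 h2
      obtain rfl : j = k := by omega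
      rfl
    | succ n ih =>
      intro j h1 h2
      rw [key1 j h1 (by omega)]
      exact ih (j + 1) (by omega) (by omega)
  have hfib : ∀ T ∈ S, (∑ j ∈ Finset.Icc 1 k, (μ.cells.filter fun c => T c.1 c.2 = j).card)
      = μ.card := by
    intro T hT
    have hTm := (hmemS T).mp hT
    exact (Finset.card_eq_sum_card_fiberwise (f := fun p : ℕ × ℕ => T p.1 p.2)
      (t := Finset.Icc 1 k) (fun p hp => by
        rw [Finset.mem_coe, Finset.mem_Icc]
        exact hTm p.1 p.2 ((YoungDiagram.mem_cells p).mp hp))).symm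
  have h1 : (∑ j ∈ Finset.Icc 1 k, ∑ T ∈ S, (μ.cells.filter fun c => T c.1 c.2 = j).card)
      = k * ∑ T ∈ S, (μ.cells.filter fun c => T c.1 c.2 = k).card := by
    have h1a : (∑ j ∈ Finset.Icc 1 k, ∑ T ∈ S, (μ.cells.filter fun c => T c.1 c.2 = j).card)
        = ∑ _j ∈ Finset.Icc 1 k, ∑ T ∈ S, (μ.cells.filter fun c => T c.1 c.2 = k).card :=
      Finset.sum_congr rfl fun j hj => by
        rw [Finset.mem_Icc] at hj
        exact key2 (k - j) j hj.1 (by omega)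
    rw [h1a, Finset.sum_const, Nat.card_Icc, smul_eq_mul, Nat.add_sub_cancel]
  have h2 : (∑ j ∈ Finset.Icc 1 k, ∑ T ∈ S, (μ.cells.filter fun c => T c.1 c.2 = j).card)
      = μ.card * S.card := by
    rw [Finset.sum_comm, Finset.sum_congr rfl hfib, Finset.sum_const, smul_eq_mul, mul_comm]
  rw [hfs, hcount, ← h1, h2]
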